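/- If G is a connected chordal graph with radius r and diameter d, then 2r ≤ d + 2. -/

import Mathlib

open Finset

variable {V : Type*} [Fintype V] [DecidableEq V]

/-- The closed ball of radius `r` around `v` in the shortest-path metric of `G`. -/
noncomputable def gball (G : SimpleGraph V) (v : V) (r : ℕ) : Finset V :=
  Finset.univ.filter (fun u => G.dist v u ≤ r)

/-- `M` is a multipacking of `G` if every ball of radius `r ≥ 1` contains at most `r`
vertices of `M`. -/
def IsMultipacking (G : SimpleGraph V) (M : Finset V) : Prop :=
  ∀ v : V, ∀ r : ℕ, 1 ≤ r → (M ∩ gball G v r).card ≤ r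

/-- The multipacking number of `G`. -/
noncomputable def mp (G : SimpleGraph V) : ℕ :=
  sSup {n | ∃ M : Finset V, IsMultipacking G M ∧ M.card = n}

/-- Eccentricity of a vertex. -/
noncomputable def ecc (G : SimpleGraph V) (v : V) : ℕ :=
  Finset.univ.sup (fun u => G.dist v u)

/-- The diameter of `G`. -/
noncomputable def gdiam (G : SimpleGraph V) : ℕ :=
  Finset.univ.sup (fun p : V × V => G.dist p.1 p.2)

/-- The radius of `G`. -/
noncomputable def grad (G : SimpleGraph V) : ℕ :=
  sInf {e | ∃ v : V, ecc G v = e}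

/-- A dominating broadcast on `G`: a function `f : V → {0, …, diam G}` such that every
vertex hears a broadcast from some tower. -/
def IsDominatingBroadcast (G : SimpleGraph V) (f : V → ℕ) : Prop :=
  (∀ v : V, f v ≤ gdiam G) ∧ ∀ u : V, ∃ v : V, 0 < f v ∧ G.dist u v ≤ f v

/-- The broadcast domination number of `G`. -/
noncomputable def gammaB (G : SimpleGraph V) : ℕ :=
  sInf {c | ∃ f : V → ℕ, IsDominatingBroadcast G f ∧ ∑ v : V, f v = c}

/-- A graph is chordal if every cycle of length at least 4 has a chord, i.e. an edge of `G`
joining two vertices of the cycle which is not an edge of the cycle. -/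
def IsChordal (G : SimpleGraph V) : Prop :=
  ∀ ⦃v : V⦄ (c : G.Walk v v), c.IsCycle → 4 ≤ c.length →
    ∃ u w : V, u ∈ c.support ∧ w ∈ c.support ∧ G.Adj u w ∧ s(u, w) ∉ c.edges

/-- `G` is `δ`-hyperbolic: for any four vertices, the two larger of the three pairwise
distance sums differ by at most `2δ`. -/
def IsHyperbolic (G : SimpleGraph V) (δ : ℕ) : Prop :=
  ∀ u v w x : V,
    G.dist u v + G.dist w x ≤
      max (G.dist u w + G.dist v x) (G.dist u x + G.dist v w) + 2 * δ



open SimpleGraph Walk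


variable {W : Type*} {G : SimpleGraph W}

/-- `s` is a simplicial vertex: its neighborhood is a clique. -/
def Simp (G : SimpleGraph W) (s : W) : Prop :=
  ∀ ⦃u w : W⦄, G.Adj s u → G.Adj s w → u ≠ w → G.Adj u w

/-- A walk whose support lies in `A` gives a walk in the induced subgraph, same length. -/
lemma exists_induce_walk {A : Set W} :
    ∀ {u v : W} (p : G.Walk u v) (hp : ∀ x ∈ p.support, x ∈ A) (hu : u ∈ A) (hv : v ∈ A),
      ∃ q : (G.induce A).Walk ⟨u, hu⟩ ⟨v, hv⟩, q.length = p.length := by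
  intro u v p
  induction p with
  | nil => intro _ hu hv; exact ⟨Walk.nil, rfl⟩
  | @cons u b v h p ih =>
      intro hp hu hv
      have hb : b ∈ A := hp b (by simp)
      obtain ⟨q, hq⟩ := ih (fun x hx => hp x (by simp [hx])) hb hv
      exact ⟨Walk.cons (by simpa using h) q, by simp [hq]⟩

lemma induce_dist_le {A : Set W} {u v : W} (hu : u ∈ A) (hv : v ∈ A)
    (p : G.Walk u v) (hp : ∀ x ∈ p.support, x ∈ A) :
    (G.induce A).dist ⟨u, hu⟩ ⟨v, hv⟩ ≤ p.length := by
  obtain ⟨q, hq⟩ := exists_induce_walk p hp hu hv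
  exact hq ▸ SimpleGraph.dist_le q

lemma dist_le_induce_dist {A : Set W} {u v : W} (hu : u ∈ A) (hv : v ∈ A)
    (hr : (G.induce A).Reachable ⟨u, hu⟩ ⟨v, hv⟩) :
    G.dist u v ≤ (G.induce A).dist ⟨u, hu⟩ ⟨v, hv⟩ := by
  obtain ⟨q, hq⟩ := hr.exists_walk_length_eq_dist
  calc G.dist u v ≤ (q.map (SimpleGraph.Embedding.induce A).toHom).length := SimpleGraph.dist_le _
  _ = _ := by rw [Walk.length_map, hq]



section Chunk2
open SimpleGraph Walk

variable {W : Type*} [Fintype W] [DecidableEq W] {G : SimpleGraph W}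

lemma chordal_induce (hch : IsChordal G) (A : Set W) [Fintype A] :
    IsChordal (G.induce A) := by
  intro v c hcyc hlen
  have hinj : Function.Injective (((SimpleGraph.Embedding.induce A : G.induce A ↪g G).toHom) : A → W) :=
    Subtype.val_injective
  have hcyc' : (c.map ((SimpleGraph.Embedding.induce A : G.induce A ↪g G).toHom)).IsCycle := hcyc.map hinj
  have hlen' : 4 ≤ (c.map ((SimpleGraph.Embedding.induce A : G.induce A ↪g G).toHom)).length := by
    rwa [Walk.length_map]
  obtain ⟨u, w, hu, hw, hadj, hne⟩ := hch _ hcyc' hlen'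
  rw [Walk.support_map, List.mem_map] at hu hw
  obtain ⟨u', hu', rfl⟩ := hu
  obtain ⟨w', hw', rfl⟩ := hw
  refine ⟨u', w', hu', hw', by simpa using hadj, fun hmem => hne ?_⟩
  rw [Walk.edges_map, List.mem_map]
  exact ⟨s(u', w'), hmem, rfl⟩

variable {s : W}

lemma exists_walk_avoid_aux (hs : Simp G s) :
    ∀ (n : ℕ) {u v : W} (p : G.Walk u v), p.length ≤ n → u ≠ s → v ≠ s →
      ∃ q : G.Walk u v, s ∉ q.support ∧ q.length ≤ p.length := by
  intro n
  induction n with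
  | zero =>
      intro u v p hlen hu _
      cases p with
      | nil => exact ⟨Walk.nil, by simpa using Ne.symm hu, le_rfl⟩
      | cons h p' => simp at hlen
  | succ n ih =>
      intro u v p hlen hu hv
      cases p with
      | nil => exact ⟨Walk.nil, by simpa using Ne.symm hu, le_rfl⟩
      | @cons _ b _ h p' =>
          by_cases hb : b = s
          · subst hb
            cases p' with
            | nil => exact absurd rfl hv
            | @cons _ c _ h2 p'' =>
                by_cases hc : c = u
                · subst hc
                  obtain ⟨q, hq1, hq2⟩ := ih p'' (by simp at hlen; omega) hu hv
                  exact ⟨q, hq1, by simp; omega⟩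
                · have hadj : G.Adj u c := hs h.symm h2 (fun he => hc he.symm)
                  obtain ⟨q, hq1, hq2⟩ := ih (Walk.cons hadj p'') (by simp at hlen ⊢; omega) hu hv
                  exact ⟨q, hq1, by simp at hq2 ⊢; omega⟩
          · obtain ⟨q, hq1, hq2⟩ := ih p' (by simp at hlen; omega) hb hv
            exact ⟨Walk.cons h q, by simp [hq1, Ne.symm hu], by simp; omega⟩

lemma exists_walk_avoid (hs : Simp G s) {u v : W} (p : G.Walk u v) (hu : u ≠ s) (hv : v ≠ s) :
    ∃ q : G.Walk u v, s ∉ q.support ∧ q.length ≤ p.length :=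
  exists_walk_avoid_aux hs p.length p le_rfl hu hv

lemma del_reachable (hconn : G.Connected) (hs : Simp G s) {u v : W} (hu : u ≠ s) (hv : v ≠ s) :
    (G.induce {x : W | x ≠ s}).Reachable ⟨u, hu⟩ ⟨v, hv⟩ := by
  obtain ⟨p⟩ := hconn u v
  obtain ⟨q, hq1, _⟩ := exists_walk_avoid hs p hu hv
  obtain ⟨q', _⟩ := exists_induce_walk (A := {x : W | x ≠ s}) q
    (fun x hx => fun hxs => hq1 (hxs ▸ hx)) hu hv
  exact ⟨q'⟩

lemma del_connected (hconn : G.Connected) (hs : Simp G s) (hW : ∃ u : W, u ≠ s) :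
    (G.induce {x : W | x ≠ s}).Connected := by
  obtain ⟨u, hu⟩ := hW
  have hpre : (G.induce {x : W | x ≠ s}).Preconnected := by
    intro a b
    have := del_reachable hconn hs a.2 b.2
    convert this <;> simp
  exact { preconnected := hpre, nonempty := ⟨⟨u, hu⟩⟩ }
  
end Chunk2

section Chunk3
open SimpleGraph Walk

variable {W : Type*} [DecidableEq W] {G : SimpleGraph W} {x y u w : W}

lemma edge_mem_of_length_one {p : G.Walk u w} (h1 : p.length = 1) : s(u, w) ∈ p.edges := by
  cases p with
  | nil => simp at h1
  | @cons _ bb _ h' q =>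
      have hq0 : q.length = 0 := by simpa using h1
      have hbw : bb = w := Walk.eq_of_length_eq_zero hq0
      subst hbw
      simp

lemma takeUntil_cons_ne {a b : W} (r : G.Adj a b) (p : G.Walk b y) (hw : w ∈ (Walk.cons r p).support)
    (hwa : w ≠ a) (hw' : w ∈ p.support) :
    (Walk.cons r p).takeUntil w hw = Walk.cons r (p.takeUntil w hw') := by
  simp only [Walk.takeUntil]
  rw [dif_neg (fun h => hwa h.symm)]

lemma takeUntil_or (p : G.Walk x y) (hu : u ∈ p.support) (hw : w ∈ p.support) :
    u ∈ (p.takeUntil w hw).support ∨ w ∈ (p.takeUntil u hu).support := by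
  induction p with
  | nil =>
      left
      rw [Walk.mem_support_nil_iff] at hu
      subst hu
      exact Walk.start_mem_support _
  | @cons a b c r p ih =>
      by_cases hua : u = a
      · left; subst hua; exact Walk.start_mem_support _
      by_cases hwa : w = a
      · right; subst hwa; exact Walk.start_mem_support _
      have hu' : u ∈ p.support := by
        have := hu
        rw [Walk.support_cons] at this
        rcases List.mem_cons.mp this with h | h
        · exact absurd h hua
        · exact h
      have hw' : w ∈ p.support := by
        have := hw
        rw [Walk.support_cons] at this
        rcases List.mem_cons.mp this with h | h
        · exact absurd h hwa
        · exact h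
      rw [takeUntil_cons_ne r p hw hwa hw', takeUntil_cons_ne r p hu hua hu']
      rcases ih hu' hw' with h | h
      · left; rw [Walk.support_cons]; exact List.mem_cons_of_mem _ h
      · right; rw [Walk.support_cons]; exact List.mem_cons_of_mem _ h

lemma chord_shortcut_aux (P : G.Walk x y) (hu : u ∈ P.support) (hw : w ∈ P.support)
    (hadj : G.Adj u w) (hne : s(u, w) ∉ P.edges)
    (hbefore : u ∈ (P.takeUntil w hw).support) :
    ∃ Q : G.Walk x y, (∀ z ∈ Q.support, z ∈ P.support) ∧ Q.length < P.length := by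
  set T := P.takeUntil w hw with hT
  set D := P.dropUntil w hw with hD
  have hlenP : T.length + D.length = P.length := by
    rw [← Walk.length_append, Walk.take_spec]
  set T1 := T.takeUntil u hbefore with hT1
  set T2 := T.dropUntil u hbefore with hT2
  have hlenT : T1.length + T2.length = T.length := by
    rw [← Walk.length_append, Walk.take_spec]
  have hT2pos : T2.length ≠ 0 := by
    intro h0
    exact G.ne_of_adj hadj (Walk.eq_of_length_eq_zero h0)
  have hT2ne1 : T2.length ≠ 1 := by
    intro h1
    have hmem : s(u, w) ∈ T2.edges := edge_mem_of_length_one h1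
    exact hne (P.edges_takeUntil_subset hw (T.edges_dropUntil_subset hbefore hmem))
  refine ⟨T1.append (Walk.cons hadj D), ?_, ?_⟩
  · intro z hz
    rw [Walk.mem_support_append_iff] at hz
    rcases hz with hz | hz
    · exact P.support_takeUntil_subset hw (T.support_takeUntil_subset hbefore hz)
    · rw [Walk.support_cons] at hz
      rcases List.mem_cons.mp hz with hz | hz
      · exact hz ▸ hu
      · exact P.support_dropUntil_subset hw hz
  · rw [Walk.length_append, Walk.length_cons]
    omega

lemma chord_shortcut (P : G.Walk x y) (hu : u ∈ P.support) (hw : w ∈ P.support)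
    (hadj : G.Adj u w) (hne : s(u, w) ∉ P.edges) :
    ∃ Q : G.Walk x y, (∀ z ∈ Q.support, z ∈ P.support) ∧ Q.length < P.length := by
  rcases takeUntil_or P hu hw with h | h
  · exact chord_shortcut_aux P hu hw hadj hne h
  · refine chord_shortcut_aux P hw hu hadj.symm ?_ h
    rwa [Sym2.eq_swap]

end Chunk3

section Chunk4
open SimpleGraph Walk

variable {W : Type*} [DecidableEq W] {G : SimpleGraph W}

/-- Vertices reachable from `a` by walks avoiding the set `F`. -/
def AvoidComp (G : SimpleGraph W) (F : Set W) (a : W) : Set W :=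
  {v | ∃ p : G.Walk a v, ∀ x ∈ p.support, x ∉ F}

/-- The external neighborhood of a set. -/
def Fringe (G : SimpleGraph W) (A : Set W) : Set W :=
  {x | x ∉ A ∧ ∃ y ∈ A, G.Adj x y}

lemma avoidComp_not_mem {F : Set W} {a v : W} (h : v ∈ AvoidComp G F a) : v ∉ F := by
  obtain ⟨p, hp⟩ := h
  exact hp v (Walk.end_mem_support p)

lemma avoidComp_self {F : Set W} {a : W} (ha : a ∉ F) : a ∈ AvoidComp G F a :=
  ⟨Walk.nil, by simpa using ha⟩

lemma avoidComp_step {F : Set W} {a v z : W} (hv : v ∈ AvoidComp G F a)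
    (hadj : G.Adj v z) (hz : z ∉ F) : z ∈ AvoidComp G F a := by
  obtain ⟨p, hp⟩ := hv
  refine ⟨p.concat hadj, fun x hx => ?_⟩
  rw [Walk.support_concat] at hx
  rcases List.mem_append.mp hx with hx | hx
  · exact hp x hx
  · exact (List.mem_singleton.mp hx) ▸ hz

lemma avoidComp_support {F : Set W} {a v : W} (p : G.Walk a v)
    (hp : ∀ x ∈ p.support, x ∉ F) : ∀ z ∈ p.support, z ∈ AvoidComp G F a := by
  intro z hz
  exact ⟨p.takeUntil z hz, fun x hx => hp x (p.support_takeUntil_subset hz hx)⟩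

lemma avoidComp_connect {F : Set W} {a u v : W} (hu : u ∈ AvoidComp G F a)
    (hv : v ∈ AvoidComp G F a) :
    ∃ p : G.Walk u v, ∀ x ∈ p.support, x ∈ AvoidComp G F a := by
  obtain ⟨pu, hpu⟩ := hu
  obtain ⟨pv, hpv⟩ := hv
  refine ⟨pu.reverse.append pv, fun x hx => ?_⟩
  rw [Walk.mem_support_append_iff] at hx
  rcases hx with hx | hx
  · rw [Walk.support_reverse, List.mem_reverse] at hx
    exact avoidComp_support pu hpu x hx
  · exact avoidComp_support pv hpv x hx

lemma isPath_concat {u v z : W} {p : G.Walk u v} (hp : p.IsPath) (h : G.Adj v z)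
    (hz : z ∉ p.support) : (p.concat h).IsPath := by
  rw [← Walk.isPath_reverse_iff, Walk.reverse_concat]
  apply Walk.IsPath.cons
  · rwa [Walk.isPath_reverse_iff]
  · rwa [Walk.support_reverse, List.mem_reverse]

end Chunk4

section Chunk5
open SimpleGraph Walk

variable {W : Type*} [Fintype W] [DecidableEq W] {G : SimpleGraph W}

lemma sep_clique (hch : IsChordal G) (a b : W)
    {x y : W}
    (hx : x ∈ Fringe G (AvoidComp G {z | z = b ∨ G.Adj b z} a))
    (hy : y ∈ Fringe G (AvoidComp G {z | z = b ∨ G.Adj b z} a))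
    (hxy : x ≠ y) : G.Adj x y := by
  set F : Set W := {z | z = b ∨ G.Adj b z} with hF
  set A : Set W := AvoidComp G F a with hA
  by_contra hnxy
  -- fringe vertices are adjacent to b
  have fringe_adj : ∀ {z : W}, z ∈ Fringe G A → G.Adj b z := by
    intro z hz
    obtain ⟨hzA, y0, hy0A, hadj⟩ := hz
    have hzF : z ∈ F := by
      by_contra hzF
      exact hzA (avoidComp_step hy0A hadj.symm hzF)
    rcases hzF with hzb | h
    · exfalso
      have : y0 ∈ F := Or.inr (hzb ▸ hadj)
      exact avoidComp_not_mem hy0A this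
    · exact h
  have hxb : G.Adj b x := fringe_adj hx
  have hyb : G.Adj b y := fringe_adj hy
  have hxnb : x ≠ b := fun h => G.irrefl (h ▸ hxb)
  have hynb : y ≠ b := fun h => G.irrefl (h ▸ hyb)
  -- a walk from x to y through A
  obtain ⟨hxA, y0, hy0A, hxy0⟩ := hx
  obtain ⟨hyA, y1, hy1A, hyy1⟩ := hy
  obtain ⟨p0, hp0⟩ := avoidComp_connect hy0A hy1A
  have hWbig : ∃ p : G.Walk x y, p.IsPath ∧ (∀ z ∈ p.support, z = x ∨ z = y ∨ z ∈ A) := by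
    refine ⟨(Walk.cons hxy0 (p0.concat hyy1.symm)).bypass, Walk.bypass_isPath _, fun z hz => ?_⟩
    have hz' := Walk.support_bypass_subset _ hz
    rw [Walk.support_cons] at hz'
    rcases List.mem_cons.mp hz' with hz' | hz'
    · exact Or.inl hz'
    · rw [Walk.support_concat] at hz'
      rcases List.mem_append.mp hz' with hz' | hz'
      · exact Or.inr (Or.inr (hp0 z hz'))
      · exact Or.inr (Or.inl (List.mem_singleton.mp hz'))
  -- take a minimum-length such path
  set Lset : Set ℕ := {n | ∃ p : G.Walk x y, p.IsPath ∧ (∀ z ∈ p.support, z = x ∨ z = y ∨ z ∈ A)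
    ∧ p.length = n} with hLset
  have hLne : Lset.Nonempty := by
    obtain ⟨p, h1, h2⟩ := hWbig
    exact ⟨p.length, p, h1, h2, rfl⟩
  obtain ⟨P, hPpath, hPsupp, hPlen⟩ := Nat.sInf_mem hLne
  -- basic facts about P
  have hlen2 : 2 ≤ P.length := by
    rcases Nat.lt_or_ge P.length 2 with h | h
    · interval_cases h' : P.length
      · exact absurd (Walk.eq_of_length_eq_zero h') hxy
      · exact absurd (Walk.adj_of_length_eq_one h') hnxy
    · exact h
  have hbP : b ∉ P.support := by
    intro hb
    rcases hPsupp b hb with h | h | h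
    · exact hxnb h.symm
    · exact hynb h.symm
    · exact avoidComp_not_mem h (Or.inl rfl)
  -- build the cycle
  set Q : G.Walk x b := P.concat hyb.symm with hQ
  have hQpath : Q.IsPath := isPath_concat hPpath hyb.symm hbP
  have hQedge : s(b, x) ∉ Q.edges := by
    rw [hQ, Walk.edges_concat, List.concat_eq_append]
    intro hmem
    rcases List.mem_append.mp hmem with h | h
    · exact hbP (P.fst_mem_support_of_mem_edges h)
    · rw [List.mem_singleton] at h
      rw [Sym2.eq_iff] at h
      rcases h with ⟨h1, h2⟩ | ⟨h1, h2⟩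
      · exact hynb h1.symm
      · exact hxy h2
  set C : G.Walk b b := Walk.cons hxb Q with hC
  have hCcyc : C.IsCycle := by
    rw [hC, Walk.cons_isCycle_iff]
    exact ⟨hQpath, hQedge⟩
  have hClen : 4 ≤ C.length := by
    rw [hC, Walk.length_cons, hQ, Walk.length_concat]
    omega
  obtain ⟨u, w, huC, hwC, hadj, hchordne⟩ := hch C hCcyc hClen
  -- membership unpacking
  have hmemC : ∀ {z : W}, z ∈ C.support → z = b ∨ z ∈ P.support := by
    intro z hz
    rw [hC, Walk.support_cons] at hz
    rcases List.mem_cons.mp hz with hz | hz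
    · exact Or.inl hz
    · rw [hQ, Walk.support_concat] at hz
      rcases List.mem_append.mp hz with hz | hz
      · exact Or.inr hz
      · exact Or.inl (List.mem_singleton.mp hz)
  have hCedges : ∀ {e : Sym2 W}, e ∈ Walk.edges Q → e ∈ C.edges := by
    intro e he
    rw [hC, Walk.edges_cons]
    exact List.mem_cons_of_mem _ he
  have hPedgesC : ∀ {e : Sym2 W}, e ∈ P.edges → e ∈ C.edges := by
    intro e he
    apply hCedges
    rw [hQ, Walk.edges_concat, List.concat_eq_append]
    exact List.mem_append.mpr (Or.inl he)
  -- chords incident to b are impossible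
  have hbchord : ∀ {z : W}, z ∈ P.support → G.Adj b z → s(b, z) ∈ C.edges ∨ False → True := fun _ _ _ => trivial
  have hbchord2 : ∀ {z : W}, z ∈ P.support → G.Adj b z → s(b, z) ∈ C.edges := by
    intro z hzP hbz
    rcases hPsupp z hzP with h | h | h
    · subst h
      rw [hC, Walk.edges_cons]
      exact List.mem_cons_self
    · subst h
      have : s(z, b) ∈ Q.edges := by
        rw [hQ, Walk.edges_concat, List.concat_eq_append]
        exact List.mem_append.mpr (Or.inr (List.mem_singleton.mpr rfl))
      have := hCedges this
      rwa [Sym2.eq_swap] at this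
    · exfalso
      have hzF : z ∈ F := Or.inr hbz
      exact avoidComp_not_mem h hzF
  -- analyze the chord
  have huP : u ∈ P.support := by
    rcases hmemC huC with h | h
    · exfalso
      subst h
      rcases hmemC hwC with h' | h'
      · exact G.ne_of_adj hadj h'.symm
      · exact hchordne (hbchord2 h' hadj)
    · exact h
  have hwP : w ∈ P.support := by
    rcases hmemC hwC with h | h
    · exfalso
      subst h
      have := hbchord2 huP hadj.symm
      rw [Sym2.eq_swap] at this
      exact hchordne this
    · exact h
  have hnotP : s(u, w) ∉ P.edges := fun h => hchordne (hPedgesC h)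
  obtain ⟨Q', hQ'supp, hQ'len⟩ := chord_shortcut P huP hwP hadj hnotP
  have : Q'.bypass.length ∈ Lset := by
    refine ⟨Q'.bypass, Walk.bypass_isPath _, fun z hz => ?_, rfl⟩
    exact hPsupp z (hQ'supp z (Walk.support_bypass_subset _ hz))
  have hge := Nat.sInf_le this
  have hle := Walk.length_bypass_le Q'
  omega

end Chunk5

section Chunk6
open SimpleGraph Walk

variable {W : Type*} [DecidableEq W] {G : SimpleGraph W}

/-- Dirac-type conclusion: complete, or two nonadjacent simplicial vertices. -/
def DC {X : Type*} (H : SimpleGraph X) : Prop :=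
  (∀ u v : X, u ≠ v → H.Adj u v) ∨
    ∃ s t : X, s ≠ t ∧ ¬H.Adj s t ∧ Simp H s ∧ Simp H t

lemma fringe_adj_b {a b : W} {z : W}
    (hz : z ∈ Fringe G (AvoidComp G {x | x = b ∨ G.Adj b x} a)) : G.Adj b z := by
  obtain ⟨hzA, y0, hy0A, hadj⟩ := hz
  have hzF : z ∈ {x | x = b ∨ G.Adj b x} := by
    by_contra hzF
    exact hzA (avoidComp_step hy0A hadj.symm hzF)
  rcases hzF with hzb | h
  · exfalso
    have : y0 ∈ {x | x = b ∨ G.Adj b x} := Or.inr (hzb ▸ hadj)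
    exact avoidComp_not_mem hy0A this
  · exact h

lemma walk_enters {A : Set W} :
    ∀ {u v : W} (p : G.Walk u v), u ∉ A → v ∈ A → ∃ z ∈ p.support, z ∈ Fringe G A := by
  intro u v p
  induction p with
  | nil => intro hu hv; exact absurd hv hu
  | @cons u c v h q ih =>
      intro hu hv
      by_cases hc : c ∈ A
      · exact ⟨u, Walk.start_mem_support _, hu, c, hc, h⟩
      · obtain ⟨z, hz1, hz2⟩ := ih hc hv
        refine ⟨z, ?_, hz2⟩
        rw [Walk.support_cons]
        exact List.mem_cons_of_mem _ hz1

lemma core_extract {A : Set W} {c : W} (hcA : c ∈ A)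
    (hfr : ∀ x y : W, x ∈ Fringe G A → y ∈ Fringe G A → x ≠ y → G.Adj x y)
    (hDC : DC (G.induce (A ∪ Fringe G A))) : ∃ s, s ∈ A ∧ Simp G s := by
  have hnbr : ∀ {z u : W}, z ∈ A → G.Adj z u → u ∈ A ∪ Fringe G A := by
    intro z u hz hadj
    by_cases hu : u ∈ A
    · exact Or.inl hu
    · exact Or.inr ⟨hu, z, hz, hadj.symm⟩
  rcases hDC with hcomp | ⟨s1, t1, hne, hnadj, hs1, ht1⟩
  · refine ⟨c, hcA, fun u w h1 h2 hne => ?_⟩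
    have hu : u ∈ A ∪ Fringe G A := hnbr hcA h1
    have hw : w ∈ A ∪ Fringe G A := hnbr hcA h2
    have := hcomp ⟨u, hu⟩ ⟨w, hw⟩ (fun he => hne (congrArg Subtype.val he))
    simpa using this
  · have hone : (s1 : W) ∈ A ∨ (t1 : W) ∈ A := by
      by_contra hboth
      push_neg at hboth
      have hs1f : (s1 : W) ∈ Fringe G A := s1.2.resolve_left hboth.1
      have ht1f : (t1 : W) ∈ Fringe G A := t1.2.resolve_left hboth.2
      have : G.Adj (s1 : W) (t1 : W) :=
        hfr _ _ hs1f ht1f (fun he => hne (Subtype.ext he))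
      exact hnadj (by simpa using this)
    have key : ∀ (σ : ↥(A ∪ Fringe G A)), (σ : W) ∈ A → Simp (G.induce (A ∪ Fringe G A)) σ →
        ∃ s, s ∈ A ∧ Simp G s := by
      intro σ hσA hσsimp
      refine ⟨σ, hσA, fun u w h1 h2 hne => ?_⟩
      have hu : u ∈ A ∪ Fringe G A := hnbr hσA h1
      have hw : w ∈ A ∪ Fringe G A := hnbr hσA h2
      have a1 : (G.induce (A ∪ Fringe G A)).Adj σ ⟨u, hu⟩ := by simpa using h1
      have a2 : (G.induce (A ∪ Fringe G A)).Adj σ ⟨w, hw⟩ := by simpa using h2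
      have := hσsimp a1 a2 (fun he => hne (congrArg Subtype.val he))
      simpa using this
    rcases hone with h | h
    · exact key s1 h hs1
    · exact key t1 h ht1

end Chunk6

section Chunk7
open SimpleGraph Walk

universe u

theorem dirac_card : ∀ (n : ℕ), ∀ {W : Type u} [Fintype W] [DecidableEq W] (G : SimpleGraph W),
    Fintype.card W ≤ n → IsChordal G → DC G := by
  intro n
  induction n with
  | zero =>
      intro W _ _ G hcard _
      left
      intro u
      have : IsEmpty W := Fintype.card_eq_zero_iff.mp (Nat.le_zero.mp hcard)
      exact (this.false u).elim
  | succ n ih =>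
      intro W _ _ G hcard hch
      by_cases hcomp : ∀ u v : W, u ≠ v → G.Adj u v
      · exact Or.inl hcomp
      push_neg at hcomp
      obtain ⟨a, b, hne, hnadj⟩ := hcomp
      right
      -- generic inductive hypothesis for induced subgraphs missing a vertex
      have hDCind : ∀ (B : Set W) (w : W), w ∉ B → DC (G.induce B) := by
        intro B w hw
        letI : DecidablePred (· ∈ B) := Classical.decPred _
        have hlt : Fintype.card B < Fintype.card W := Fintype.card_subtype_lt (x := w) hw
        exact ih (G.induce B) (by omega) (chordal_induce hch B)
      -- side a
      have haF : a ∉ {x : W | x = b ∨ G.Adj b x} := by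
        intro h
        rcases h with h | h
        · exact hne h
        · exact hnadj h.symm
      have haA : a ∈ AvoidComp G {x : W | x = b ∨ G.Adj b x} a := avoidComp_self haF
      have hScl : ∀ x y : W, x ∈ Fringe G (AvoidComp G {x : W | x = b ∨ G.Adj b x} a) →
          y ∈ Fringe G (AvoidComp G {x : W | x = b ∨ G.Adj b x} a) → x ≠ y → G.Adj x y :=
        fun x y hx hy hxy => sep_clique hch a b hx hy hxy
      have hbnot : b ∉ (AvoidComp G {x : W | x = b ∨ G.Adj b x} a)
          ∪ Fringe G (AvoidComp G {x : W | x = b ∨ G.Adj b x} a) := by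
        rintro (h | h)
        · exact avoidComp_not_mem h (Or.inl rfl)
        · exact G.irrefl (fringe_adj_b h)
      obtain ⟨sa, hsaA, hsaSimp⟩ := core_extract haA hScl (hDCind _ b hbnot)
      -- abbreviations
      set A := AvoidComp G {x : W | x = b ∨ G.Adj b x} a with hAdef
      set S := Fringe G A with hSdef
      -- side b
      have hbA : b ∉ A := fun h => avoidComp_not_mem h (Or.inl rfl)
      have hbS : b ∉ S := fun h => G.irrefl (fringe_adj_b h)
      have hbBc : b ∈ AvoidComp G S b := avoidComp_self hbS
      have hfrBc : ∀ z : W, z ∈ Fringe G (AvoidComp G S b) → z ∈ S := by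
        intro z hz
        obtain ⟨hz1, y, hy, hadj⟩ := hz
        by_contra hzS
        exact hz1 (avoidComp_step hy hadj.symm hzS)
      have hfrcl : ∀ x y : W, x ∈ Fringe G (AvoidComp G S b) → y ∈ Fringe G (AvoidComp G S b) →
          x ≠ y → G.Adj x y := fun x y hx hy hxy => hScl x y (hfrBc x hx) (hfrBc y hy) hxy
      have hnotBc : ∀ z : W, z ∈ A → z ∉ AvoidComp G S b := by
        intro z hzA hzBc
        obtain ⟨p, hp⟩ := hzBc
        obtain ⟨t, ht1, ht2⟩ := walk_enters p hbA hzA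
        exact hp t ht1 ht2
      have hanot : a ∉ (AvoidComp G S b) ∪ Fringe G (AvoidComp G S b) := by
        rintro (h | h)
        · exact hnotBc a haA h
        · exact (hfrBc a h).1 haA
      obtain ⟨sb, hsbBc, hsbSimp⟩ := core_extract hbBc hfrcl (hDCind _ a hanot)
      -- conclusion
      have hsne : sa ≠ sb := by
        intro h
        exact hnotBc sa hsaA (h ▸ hsbBc)
      have hsnadj : ¬ G.Adj sa sb := by
        intro hadj
        have hsaBc : sa ∉ AvoidComp G S b := hnotBc sa hsaA
        have : sa ∈ Fringe G (AvoidComp G S b) := ⟨hsaBc, sb, hsbBc, hadj⟩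
        exact (hfrBc sa this).1 hsaA
      exact ⟨sa, sb, hsne, hsnadj, hsaSimp, hsbSimp⟩

theorem exists_simplicial {W : Type u} [Fintype W] [DecidableEq W] [Nonempty W]
    (G : SimpleGraph W) (hch : IsChordal G) : ∃ s : W, Simp G s := by
  rcases dirac_card (Fintype.card W) G le_rfl hch with hcomp | ⟨s, _, _, _, hs, _⟩
  · obtain ⟨s⟩ := ‹Nonempty W›
    refine ⟨s, fun u w h1 h2 hne => hcomp u w hne⟩
  · exact ⟨s, hs⟩

end Chunk7

section Chunk8
open SimpleGraph Walk

variable {W : Type*} [Fintype W] [DecidableEq W] {G : SimpleGraph W}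

lemma exists_gate (hconn : G.Connected) {s w : W} (hws : w ≠ s) :
    ∃ q : W, G.Adj s q ∧ G.dist q w + 1 ≤ G.dist s w := by
  have hpos : 0 < G.dist s w := hconn.pos_dist_of_ne (Ne.symm hws)
  obtain ⟨p, hp⟩ := hconn.exists_walk_length_eq_dist s w
  cases p with
  | nil => exact absurd rfl hws
  | @cons _ c _ h q =>
      refine ⟨c, h, ?_⟩
      have : G.dist c w ≤ q.length := SimpleGraph.dist_le q
      rw [Walk.length_cons] at hp
      omega

lemma adj_dist_le (hconn : G.Connected) {s : W} (hs : Simp G s) {w u' : W}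
    (hws : w ≠ s) (hu' : G.Adj s u') : G.dist u' w ≤ G.dist s w := by
  obtain ⟨q, hq1, hq2⟩ := exists_gate hconn hws
  by_cases he : u' = q
  · subst he; omega
  · have hadj : G.Adj u' q := hs hu' hq1 he
    have h1 : G.dist u' w ≤ G.dist u' q + G.dist q w := hconn.dist_triangle
    have h2 : G.dist u' q ≤ 1 := by
      have := SimpleGraph.dist_le (Walk.cons hadj Walk.nil)
      simpa using this
    omega

lemma del_dist_eq (hconn : G.Connected) {s : W} (hs : Simp G s) {u v : W}
    (hu : u ≠ s) (hv : v ≠ s) :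
    (G.induce {x : W | x ≠ s}).dist ⟨u, hu⟩ ⟨v, hv⟩ = G.dist u v := by
  apply le_antisymm
  · obtain ⟨p, hp⟩ := hconn.exists_walk_length_eq_dist u v
    obtain ⟨q, hq1, hq2⟩ := exists_walk_avoid hs p hu hv
    have := induce_dist_le (A := {x : W | x ≠ s}) hu hv q (fun x hx => fun hxs => hq1 (hxs ▸ hx))
    omega
  · exact dist_le_induce_dist (A := {x : W | x ≠ s}) hu hv (del_reachable hconn hs hu hv)

end Chunk8

section Chunk9
open SimpleGraph Walk Finset

universe u v

theorem clique_meet :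
    ∀ (n : ℕ) {W : Type u} [Fintype W] [DecidableEq W] (G : SimpleGraph W),
      Fintype.card W ≤ n → G.Connected → IsChordal G →
      ∀ {ι : Type v} (K : ι → Finset W) (r : ι → ℕ),
        (∀ i, (K i).Nonempty) → (∀ i, G.IsClique (K i : Set W)) →
        (∀ i j, ∃ u ∈ K i, ∃ w ∈ K j, G.dist u w ≤ r i + r j + 1) →
        ∃ Q : Finset W, Q.Nonempty ∧ G.IsClique (Q : Set W) ∧
          ∀ i, ∃ q ∈ Q, ∃ u ∈ K i, G.dist q u ≤ r i := by
  intro n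
  induction n with
  | zero =>
      intro W _ _ G hcard hconn _ ι K r _ _ _
      exfalso
      obtain ⟨x⟩ := hconn.nonempty
      have : 0 < Fintype.card W := Fintype.card_pos_iff.mpr ⟨x⟩
      omega
  | succ n ih =>
      intro W _W1 _W2 G hcard hconn hch ι K r hKne hKcl hpair
      haveI : Nonempty W := hconn.nonempty
      obtain ⟨s, hs⟩ := exists_simplicial G hch
      classical
      set Ns : Finset W := Finset.univ.filter (fun x => G.Adj s x) with hNs
      have hNs_mem : ∀ {x : W}, x ∈ Ns ↔ G.Adj s x := by
        intro x; simp [hNs]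
      by_cases hsingle : ∀ v : W, v = s
      · refine ⟨{s}, ⟨s, mem_singleton_self s⟩, by simp, fun i => ?_⟩
        obtain ⟨u, hu⟩ := hKne i
        have hus : u = s := hsingle u
        subst hus
        exact ⟨u, mem_singleton_self _, u, hu, by simp [SimpleGraph.dist_self]⟩
      push_neg at hsingle
      obtain ⟨u0, hu0⟩ := hsingle
      have hNsne : Ns.Nonempty := by
        obtain ⟨q, hq1, _⟩ := exists_gate hconn hu0
        exact ⟨q, hNs_mem.mpr hq1⟩
      have herase_ne : ∀ i, K i ≠ {s} → ((K i).erase s).Nonempty := by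
        intro i hne
        obtain ⟨u, hu⟩ := hKne i
        by_cases hus : u = s
        · have hsK : s ∈ K i := hus ▸ hu
          have : ∃ y ∈ K i, y ≠ s := by
            by_contra hall
            push_neg at hall
            exact hne (Finset.eq_singleton_iff_unique_mem.mpr ⟨hsK, hall⟩)
          obtain ⟨y, hy1, hy2⟩ := this
          exact ⟨y, mem_erase.mpr ⟨hy2, hy1⟩⟩
        · exact ⟨u, mem_erase.mpr ⟨hus, hu⟩⟩
      have herase_adj : ∀ (i : ι) {y : W}, s ∈ K i → y ∈ (K i).erase s → G.Adj s y := by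
        intro i y hsK hy
        exact hKcl i (mem_coe.mpr hsK) (mem_coe.mpr (mem_erase.mp hy).2)
          (Ne.symm (mem_erase.mp hy).1)
      by_cases hzero : ∃ i, r i = 0 ∧ K i = {s}
      · obtain ⟨i0, hi0r, hi0K⟩ := hzero
        refine ⟨insert s Ns, ⟨s, mem_insert_self _ _⟩, ?_, ?_⟩
        · intro x hx y hy hxy
          simp only [coe_insert, Set.mem_insert_iff, mem_coe] at hx hy
          rcases hx with rfl | hx
          · rcases hy with rfl | hy
            · exact absurd rfl hxy
            · exact hNs_mem.mp hy
          · rcases hy with rfl | hy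
            · exact (hNs_mem.mp hx).symm
            · exact hs (hNs_mem.mp hx) (hNs_mem.mp hy) hxy
        · intro j
          obtain ⟨u, hu, w, hw, hd⟩ := hpair i0 j
          rw [hi0K, mem_singleton] at hu
          subst hu
          rw [hi0r] at hd
          by_cases hds : G.dist u w ≤ r j
          · exact ⟨u, mem_insert_self _ _, w, hw, hds⟩
          · have hws : w ≠ u := by
              intro h
              subst h
              rw [SimpleGraph.dist_self] at hds
              omega
            obtain ⟨q, hq1, hq2⟩ := exists_gate hconn hws
            exact ⟨q, mem_insert_of_mem (hNs_mem.mpr hq1), w, hw, by omega⟩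
      · push_neg at hzero
        have hmove : ∀ (i : ι) {u w : W}, K i ≠ {s} → u ∈ K i → w ≠ s →
            ∃ u' ∈ (K i).erase s, G.dist u' w ≤ G.dist u w := by
          intro i u w hKi hu hws
          by_cases hus : u = s
          · subst hus
            obtain ⟨y, hy⟩ := herase_ne i hKi
            exact ⟨y, hy, adj_dist_le hconn hs hws (herase_adj i hu hy)⟩
          · exact ⟨u, mem_erase.mpr ⟨hus, hu⟩, le_rfl⟩
        set K' : ι → Finset W := fun i => if K i = {s} then Ns else (K i).erase s with hK'
        set r' : ι → ℕ := fun i => if K i = {s} then r i - 1 else r i with hr'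
        have hK's : ∀ (i : ι) {x : W}, x ∈ K' i → x ≠ s := by
          intro i x hx
          simp only [hK'] at hx
          split_ifs at hx with h
          · intro he; subst he; exact G.irrefl (hNs_mem.mp hx)
          · exact (mem_erase.mp hx).1
        have hK'ne : ∀ i, (K' i).Nonempty := by
          intro i
          simp only [hK']
          split_ifs with h
          · exact hNsne
          · exact herase_ne i h
        have hK'cl : ∀ i, G.IsClique ((K' i : Finset W) : Set W) := by
          intro i
          simp only [hK']
          split_ifs with h
          · intro x hx y hy hxy
            exact hs (hNs_mem.mp (mem_coe.mp hx)) (hNs_mem.mp (mem_coe.mp hy)) hxy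
          · exact (hKcl i).subset (by intro x hx; exact mem_coe.mpr (mem_of_mem_erase (mem_coe.mp hx)))
        have hri_pos : ∀ i, K i = {s} → 1 ≤ r i := by
          intro i h
          rcases Nat.eq_zero_or_pos (r i) with h0 | h0
          · exact absurd h (hzero i h0)
          · exact h0
        have hpair' : ∀ i j, ∃ u ∈ K' i, ∃ w ∈ K' j, G.dist u w ≤ r' i + r' j + 1 := by
          intro i j
          obtain ⟨u, hu, w, hw, hd⟩ := hpair i j
          by_cases hi : K i = {s} <;> by_cases hj : K j = {s}
          · obtain ⟨q, hq⟩ := hNsne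
            refine ⟨q, by simp [hK', hi, hq], q, by simp [hK', hj, hq], ?_⟩
            simp [SimpleGraph.dist_self]
          · -- K i = {s}, K j ≠ {s}
            rw [hi, mem_singleton] at hu
            subst hu
            have hri := hri_pos i hi
            have hr'i : r' i = r i - 1 := by simp [hr', hi]
            have hr'j : r' j = r j := by simp [hr', hj]
            by_cases hws : w = u
            · subst hws
              obtain ⟨y, hy⟩ := herase_ne j hj
              have hadj := herase_adj j hw hy
              refine ⟨y, by simp [hK', hi, hNs_mem, hadj], y, by simp [hK', hj, hy], ?_⟩
              simp [SimpleGraph.dist_self]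
            · obtain ⟨q, hq1, hq2⟩ := exists_gate hconn hws
              refine ⟨q, by simp [hK', hi, hNs_mem, hq1], w,
                by simp only [hK', if_neg hj]; exact mem_erase.mpr ⟨hws, hw⟩, ?_⟩
              omega
          · -- K i ≠ {s}, K j = {s}
            rw [hj, mem_singleton] at hw
            subst hw
            have hrj := hri_pos j hj
            have hr'i : r' i = r i := by simp [hr', hi]
            have hr'j : r' j = r j - 1 := by simp [hr', hj]
            by_cases hus : u = w
            · subst hus
              obtain ⟨y, hy⟩ := herase_ne i hi
              have hadj := herase_adj i hu hy
              refine ⟨y, by simp only [hK', if_neg hi]; exact hy, y,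
                by simp [hK', hj, hNs_mem, hadj], ?_⟩
              simp [SimpleGraph.dist_self]
            · have hus' : u ≠ w := hus
              obtain ⟨q, hq1, hq2⟩ := exists_gate hconn hus'
              rw [SimpleGraph.dist_comm] at hd
              refine ⟨u, by simp only [hK', if_neg hi]; exact mem_erase.mpr ⟨hus, hu⟩, q,
                by simp [hK', hj, hNs_mem, hq1], ?_⟩
              rw [SimpleGraph.dist_comm]
              omega
          · -- neither
            have hr'i : r' i = r i := by simp [hr', hi]
            have hr'j : r' j = r j := by simp [hr', hj]
            by_cases hws : w = s
            · have hsKj : s ∈ K j := hws ▸ hw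
              by_cases hus : u = s
              · have hsKi : s ∈ K i := hus ▸ hu
                obtain ⟨y, hy⟩ := herase_ne i hi
                obtain ⟨z, hz⟩ := herase_ne j hj
                have hay := herase_adj i hsKi hy
                have haz := herase_adj j hsKj hz
                have hyz : G.dist y z ≤ 1 := by
                  by_cases he : y = z
                  · subst he; simp [SimpleGraph.dist_self]
                  · have : G.Adj y z := hs hay haz he
                    have := SimpleGraph.dist_le (Walk.cons this Walk.nil)
                    simpa using this
                refine ⟨y, by simp only [hK', if_neg hi]; exact hy, z,
                  by simp only [hK', if_neg hj]; exact hz, by omega⟩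
              · -- u ≠ s, w = s : move w with respect to u
                obtain ⟨w', hw', hdw⟩ := hmove j hj hw hus
                refine ⟨u, by simp only [hK', if_neg hi]; exact mem_erase.mpr ⟨hus, hu⟩, w',
                  by simp only [hK', if_neg hj]; exact hw', ?_⟩
                have e1 : G.dist u w' = G.dist w' u := SimpleGraph.dist_comm
                have e2 : G.dist w u = G.dist u w := SimpleGraph.dist_comm
                omega
            · obtain ⟨u', hu', hdu⟩ := hmove i hi hu hws
              have hu's : u' ≠ s := (mem_erase.mp hu').1
              obtain ⟨w', hw', hdw⟩ := hmove j hj hw hu's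
              refine ⟨u', by simp only [hK', if_neg hi]; exact hu', w',
                by simp only [hK', if_neg hj]; exact hw', ?_⟩
              have e1 : G.dist u' w' = G.dist w' u' := SimpleGraph.dist_comm
              have e2 : G.dist w u' = G.dist u' w := SimpleGraph.dist_comm
              omega
        -- lift everything to the subgraph with s removed
        letI : DecidablePred (· ∈ {x : W | x ≠ s}) := Classical.decPred _
        have hcard' : Fintype.card ↥{x : W | x ≠ s} ≤ n := by
          have hlt : Fintype.card ↥{x : W | x ≠ s} < Fintype.card W :=
            Fintype.card_subtype_lt (x := s) (by simp)
          omega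
        have hconn' := del_connected hconn hs ⟨u0, hu0⟩
        have hch' := chordal_induce hch {x : W | x ≠ s}
        set K'' : ι → Finset ↥{x : W | x ≠ s} :=
          fun i => (K' i).subtype (· ∈ {x : W | x ≠ s}) with hK''
        have hK''mem : ∀ (i : ι) (x : ↥{x : W | x ≠ s}), x ∈ K'' i ↔ (x : W) ∈ K' i := by
          intro i x
          simp [hK'']
        have hK''ne : ∀ i, (K'' i).Nonempty := by
          intro i
          obtain ⟨u, hu⟩ := hK'ne i
          exact ⟨⟨u, hK's i hu⟩, (hK''mem i _).mpr hu⟩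
        have hK''cl : ∀ i, (G.induce {x : W | x ≠ s}).IsClique ((K'' i : Finset _) : Set _) := by
          intro i x hx y hy hxy
          have hx' := (hK''mem i x).mp (mem_coe.mp hx)
          have hy' := (hK''mem i y).mp (mem_coe.mp hy)
          have : G.Adj (x : W) (y : W) :=
            hK'cl i (mem_coe.mpr hx') (mem_coe.mpr hy') (fun he => hxy (Subtype.ext he))
          simpa using this
        have hpair'' : ∀ i j, ∃ u ∈ K'' i, ∃ w ∈ K'' j,
            (G.induce {x : W | x ≠ s}).dist u w ≤ r' i + r' j + 1 := by
          intro i j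
          obtain ⟨u, hu, w, hw, hd⟩ := hpair' i j
          refine ⟨⟨u, hK's i hu⟩, (hK''mem i _).mpr hu, ⟨w, hK's j hw⟩, (hK''mem j _).mpr hw, ?_⟩
          rw [del_dist_eq hconn hs (hK's i hu) (hK's j hw)]
          exact hd
        obtain ⟨Q', hQ'ne, hQ'cl, hQ'meet⟩ :=
          ih (G.induce {x : W | x ≠ s}) hcard' hconn' hch' K'' r' hK''ne hK''cl hpair''
        refine ⟨Q'.image Subtype.val, hQ'ne.image _, ?_, ?_⟩
        · intro x hx y hy hxy
          simp only [coe_image, Set.mem_image, mem_coe] at hx hy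
          obtain ⟨x', hx', rfl⟩ := hx
          obtain ⟨y', hy', rfl⟩ := hy
          have : (G.induce {x : W | x ≠ s}).Adj x' y' :=
            hQ'cl (mem_coe.mpr hx') (mem_coe.mpr hy') (fun he => hxy (congrArg Subtype.val he))
          simpa using this
        · intro i
          obtain ⟨q, hq, u, hu, hd⟩ := hQ'meet i
          obtain ⟨qv, hqv⟩ := q
          obtain ⟨uv, huv⟩ := u
          have hu' : uv ∈ K' i := (hK''mem i _).mp hu
          have hqW : qv ∈ Q'.image Subtype.val := mem_image.mpr ⟨⟨qv, hqv⟩, hq, rfl⟩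
          have hdist : G.dist qv uv ≤ r' i := by
            rw [← del_dist_eq hconn hs hqv huv]
            exact hd
          by_cases hi : K i = {s}
          · -- u ∈ Ns, target s ∈ K i, bound r i = r' i + 1
            have hri := hri_pos i hi
            have hr'i : r' i = r i - 1 := by simp [hr', hi]
            have hadj : G.Adj s uv := by
              have : uv ∈ Ns := by rw [hK'] at hu'; simpa [if_pos hi] using hu'
              exact hNs_mem.mp this
            have hus : G.dist uv s ≤ 1 := by
              have := SimpleGraph.dist_le (Walk.cons hadj.symm Walk.nil)
              simpa using this
            have htri : G.dist qv s ≤ G.dist qv uv + G.dist uv s :=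
              hconn.dist_triangle
            refine ⟨qv, hqW, s, by simp [hi], by omega⟩
          · have hr'i : r' i = r i := by simp [hr', hi]
            have : uv ∈ K i := by
              rw [hK'] at hu'
              simp only [if_neg hi] at hu'
              exact mem_of_mem_erase hu'
            exact ⟨qv, hqW, uv, this, by omega⟩

end Chunk9

section FinalProof
open SimpleGraph

theorem chordal_two_rad_le_diam_add_two' {V : Type*} [Fintype V] [DecidableEq V]
    (G : SimpleGraph V) (hG : G.Connected)
    (hchordal : IsChordal G) (gd : ℕ) (hgd : gd = Finset.univ.sup (fun p : V × V => G.dist p.1 p.2))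
    (gr : ℕ) (hgr : gr = sInf {e | ∃ v : V, Finset.univ.sup (fun u => G.dist v u) = e}) :
    2 * gr ≤ gd + 2 := by
  classical
  haveI : Nonempty V := hG.nonempty
  have hpair : ∀ u v : V, G.dist u v ≤ gd := by
    intro u v
    rw [hgd]
    exact Finset.le_sup (f := fun p : V × V => G.dist p.1 p.2) (Finset.mem_univ (u, v))
  have h2 : 2 * (gd / 2) + gd % 2 = gd := Nat.div_add_mod gd 2
  obtain ⟨Q, hQne, hQcl, hQmeet⟩ :=
    clique_meet (Fintype.card V) G le_rfl hG hchordal (fun v : V => {v}) (fun _ => gd / 2)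
      (fun i => ⟨i, Finset.mem_singleton_self i⟩)
      (fun i => by
        intro x hx y hy hxy
        simp only [Finset.coe_singleton, Set.mem_singleton_iff] at hx hy
        exact absurd (hx.trans hy.symm) hxy)
      (fun i j => ⟨i, Finset.mem_singleton_self i, j, Finset.mem_singleton_self j, by
        have h1 := hpair i j
        show G.dist i j ≤ gd / 2 + gd / 2 + 1
        omega⟩)
  obtain ⟨c, hc⟩ := hQne
  have hecc : Finset.univ.sup (fun u => G.dist c u) ≤ gd / 2 + 1 := by
    apply Finset.sup_le
    intro u _
    obtain ⟨q, hq, u', hu', hdq⟩ := hQmeet u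
    rw [Finset.mem_singleton] at hu'
    rw [hu'] at hdq
    have hcq : G.dist c q ≤ 1 := by
      by_cases he : c = q
      · subst he; simp [SimpleGraph.dist_self]
      · have hadj : G.Adj c q := hQcl (Finset.mem_coe.mpr hc) (Finset.mem_coe.mpr hq) he
        have := SimpleGraph.dist_le (SimpleGraph.Walk.cons hadj SimpleGraph.Walk.nil)
        simpa using this
    have htri : G.dist c u ≤ G.dist c q + G.dist q u := hG.dist_triangle
    omega
  have hgrad : gr ≤ gd / 2 + 1 := by
    have hle : gr ≤ Finset.univ.sup (fun u => G.dist c u) := by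
      rw [hgr]
      exact Nat.sInf_le ⟨c, rfl⟩
    omega
  omega

end FinalProof


/-- For a connected chordal graph with radius `r` and diameter `d`, `2r ≤ d + 2`. -/
theorem chordal_two_rad_le_diam_add_two (G : SimpleGraph V) (hG : G.Connected)
    (hchordal : IsChordal G) :
    2 * grad G ≤ gdiam G + 2 :=
  chordal_two_rad_le_diam_add_two' G hG hchordal (gdiam G) rfl (grad G) rfl
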